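/- Under Assumption 1, suppose I_σ^c = I_σ for all σ ∈ Σ (non-overlapping modeled state sets), and let C' be a safety controller for the composed abstraction S_c and safe set X_c^0. Then for every σ ∈ Σ, the projected controller C'_σ : X_σ → 2^{U_σ} defined by C'_σ(Out_σ) = ∅ and C'_σ(s_σ) = {u_σ ∈ π_{J_σ}(C'(s)) | s ∈ X_c^0, s_{I_σ} = s_σ} for s_σ ∈ X_σ^0 is a safety controller for the subsystem S_σ and safe set X_σ^0. -/
import Mathlib


open Set Function

/-- `ℝⁿ` modeled as `Fin n → ℝ`. -/
abbrev Vec (n : ℕ) : Type := Fin n → ℝ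

/-- Projection `π_{I'}` of a dependent tuple onto the components with indices in `I'`. -/
def proj {ι : Type*} (E : ι → Type*) (I' : Set ι) (x : (i : ι) → E i) : (i : I') → E i.1 :=
  fun i => x i.1

/-- `P` is a finite partition of `A`: finitely many nonempty pairwise disjoint cells covering `A`. -/
def IsFinPartition {α : Type*} (P : Set (Set α)) (A : Set α) : Prop :=
  P.Finite ∧ (∀ s ∈ P, s.Nonempty) ∧ ⋃₀ P = A ∧
    ∀ s ∈ P, ∀ t ∈ P, s ≠ t → Disjoint s t

/-- The family `A : τ → Set α` is a partition of the index type `α`. -/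
def IsIndexPartition {τ α : Type*} (A : τ → Set α) : Prop :=
  (⋃ σ, A σ) = Set.univ ∧ Pairwise (Disjoint on A)

/-- The set `𝒫` of cells `s₁ × ⋯ × s_n̄`, `s_i ∈ 𝒫_i`, of the product partition. -/
def cells {ι : Type*} {E : ι → Type*} (P : (i : ι) → Set (Set (E i))) :
    Set (Set ((i : ι) → E i)) :=
  { s | ∃ f : (i : ι) → Set (E i), (∀ i, f i ∈ P i) ∧ s = Set.pi Set.univ f }

/-- The set `X_σ⁰` of cells `∏_{i ∈ I'} s_i`, `s_i ∈ 𝒫_i`, of the partition restricted to `I'`. -/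
def cellsOn {ι : Type*} {E : ι → Type*} (P : (i : ι) → Set (Set (E i))) (I' : Set ι) :
    Set (Set ((i : I') → E i.1)) :=
  { s | ∃ f : (i : ι) → Set (E i), (∀ i, f i ∈ P i) ∧
        s = Set.pi Set.univ (fun i : I' => f i.1) }

/-- `F(𝒳',𝒰') = ⋃_{x ∈ 𝒳', u ∈ 𝒰'} F(x,u)`. -/
def Fset {X U : Type*} (F : X → U → Set X) (A : Set X) (B : Set U) : Set X :=
  ⋃ x ∈ A, ⋃ u ∈ B, F x u

/-- `Φ_σ(s_σ,u_σ) = F̄(𝒳 ∩ π_{I_σ}⁻¹(s_σ), 𝒰 ∩ π_{J_σ}⁻¹({u_σ}))`. -/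
def Phi {ι κ : Type*} (E : ι → Type*) (Fu : κ → Type*)
    (Fbar : Set ((i : ι) → E i) → Set ((j : κ) → Fu j) → Set ((i : ι) → E i))
    (Xset : Set ((i : ι) → E i)) (Uset : Set ((j : κ) → Fu j))
    (Iσ : Set ι) (Jσ : Set κ)
    (sσ : Set ((i : Iσ) → E i.1)) (uσ : (j : Jσ) → Fu j.1) : Set ((i : ι) → E i) :=
  Fbar (Xset ∩ proj E Iσ ⁻¹' sσ) (Uset ∩ proj Fu Jσ ⁻¹' {uσ})

/-- `Out_σ = π_{I_σ}(ℝⁿ) \ 𝒳_{I_σ}`. -/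
def OutOf {ι : Type*} (E : ι → Type*) (Iσ : Set ι) (Xset : Set ((i : ι) → E i)) :
    Set ((i : Iσ) → E i.1) :=
  proj E Iσ '' Set.univ \ proj E Iσ '' Xset

/-- Transition map `δ_σ` of the symbolic subsystem `S_σ`. -/
def deltaSub {ι κ : Type*} (E : ι → Type*) (Fu : κ → Type*)
    (Fbar : Set ((i : ι) → E i) → Set ((j : κ) → Fu j) → Set ((i : ι) → E i))
    (Xset : Set ((i : ι) → E i)) (Uset : Set ((j : κ) → Fu j))
    (P : (i : ι) → Set (Set (E i))) (V : (j : κ) → Set (Fu j))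
    (Iσ Icσ : Set ι) (Jσ : Set κ)
    (sσ : Set ((i : Iσ) → E i.1)) (uσ : (j : Jσ) → Fu j.1) :
    Set (Set ((i : Iσ) → E i.1)) :=
  { s' | sσ ∈ cellsOn P Iσ ∧ uσ ∈ Set.pi Set.univ (fun j : Jσ => V j.1) ∧
      ((s' ∈ cellsOn P Iσ ∧
          (s' ∩ proj E Iσ '' Phi E Fu Fbar Xset Uset Iσ Jσ sσ uσ).Nonempty) ∨
        (s' = OutOf E Iσ Xset ∧
          (proj E Iσ '' Phi E Fu Fbar Xset Uset Iσ Jσ sσ uσ ∩ proj E Iσ '' Xset = ∅ ∨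
            ¬proj E Icσ '' Phi E Fu Fbar Xset Uset Iσ Jσ sσ uσ ⊆ proj E Icσ '' Xset))) }

/-- Transition map `δ_c` of the composed abstraction `S_c`. -/
def deltaC {ι κ τ : Type*} (E : ι → Type*) (Fu : κ → Type*)
    (Fbar : Set ((i : ι) → E i) → Set ((j : κ) → Fu j) → Set ((i : ι) → E i))
    (Xset : Set ((i : ι) → E i)) (Uset : Set ((j : κ) → Fu j))
    (P : (i : ι) → Set (Set (E i))) (V : (j : κ) → Set (Fu j))
    (Im Ic : τ → Set ι) (Jm : τ → Set κ)
    (s : Set ((i : ι) → E i)) (u : (j : κ) → Fu j) :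
    Set (Set ((i : ι) → E i)) :=
  { s' | s ∈ cells P ∧ u ∈ Set.pi Set.univ V ∧
      ((s' ∈ cells P ∧ ∀ σ : τ,
          proj E (Im σ) '' s' ∈
            deltaSub E Fu Fbar Xset Uset P V (Im σ) (Ic σ) (Jm σ)
              (proj E (Im σ) '' s) (proj Fu (Jm σ) u)) ∨
        (s' = Xsetᶜ ∧ ∃ σ : τ,
          OutOf E (Im σ) Xset ∈
            deltaSub E Fu Fbar Xset Uset P V (Im σ) (Ic σ) (Jm σ)
              (proj E (Im σ) '' s) (proj Fu (Jm σ) u))) }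

/-- Safety controller for the transition map `δ` and the safe set `safe`. -/
def IsSafetyController {X U : Type*} (δ : X → U → Set X) (safe : Set X) (C : X → Set U) : Prop :=
  (∀ x, ∀ u ∈ C x, (δ x u).Nonempty) ∧
  (∀ x, (C x).Nonempty → x ∈ safe) ∧
  (∀ x, ∀ u ∈ C x, ∀ x', x' ∈ δ x u → (C x').Nonempty)

/-- Maximal safety controller. -/
def IsMaximalSafetyController {X U : Type*} (δ : X → U → Set X) (safe : Set X)
    (Cstar : X → Set U) : Prop :=
  IsSafetyController δ safe Cstar ∧
    ∀ C, IsSafetyController δ safe C → ∀ x, C x ⊆ Cstar x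

/-- Feedback refinement relation (over a common input type). -/
def IsFeedbackRefinement {Xa Xb U : Type*} (δa : Xa → U → Set Xa) (δb : Xb → U → Set Xb)
    (H : Xa → Xb) : Prop :=
  ∀ xa : Xa,
    (∀ u, (δb (H xa) u).Nonempty → (δa xa u).Nonempty) ∧
    (∀ u, (δb (H xa) u).Nonempty → H '' δa xa u ⊆ δb (H xa) u)

/-- Concrete transition map of `S = (ℝⁿ, 𝒰, F)` (inputs restricted to `𝒰`). -/
def deltaConc {X U : Type*} (F : X → U → Set X) (Uset : Set U) (x : X) (u : U) : Set X :=
  { x' | u ∈ Uset ∧ x' ∈ F x u }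

open Classical in
lemma proj_image_pi' {ι : Type*} {E : ι → Type*} (I' : Set ι) (f : (i : ι) → Set (E i))
    (hf : ∀ i, (f i).Nonempty) :
    proj E I' '' Set.pi Set.univ f = Set.pi Set.univ (fun i : I' => f i.1) := by
  ext y
  constructor
  · rintro ⟨x, hx, rfl⟩ i _
    exact hx i.1 trivial
  · intro hy
    choose g hg using hf
    refine ⟨fun i => if h : i ∈ I' then y ⟨i, h⟩ else g i, fun i _ => ?_, ?_⟩
    · by_cases h : i ∈ I'
      · simpa [h] using hy ⟨i, h⟩ trivial
      · simpa [h] using hg i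
    · funext i
      simp [proj, i.2]

theorem stmt15
    {ι κ τ : Type*} [Finite ι] [Finite κ] [Finite τ]
    (nd : ι → ℕ) (pd : κ → ℕ)
    (𝒳i : (i : ι) → Set (Vec (nd i))) (𝒰j : (j : κ) → Set (Vec (pd j)))
    (F : ((i : ι) → Vec (nd i)) → ((j : κ) → Vec (pd j)) → Set ((i : ι) → Vec (nd i)))
    (Fbar : Set ((i : ι) → Vec (nd i)) → Set ((j : κ) → Vec (pd j)) →
      Set ((i : ι) → Vec (nd i)))
    (P : (i : ι) → Set (Set (Vec (nd i)))) (V : (j : κ) → Set (Vec (pd j)))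
    (Im Ic : τ → Set ι) (Jm : τ → Set κ)
    (hF : ∀ x u, u ∈ Set.pi Set.univ 𝒰j → (F x u).Nonempty)
    (hFbar : ∀ A B, Fset F A B ⊆ Fbar A B)
    (hP : ∀ i, IsFinPartition (P i) (𝒳i i))
    (hV : ∀ j, (V j).Finite ∧ V j ⊆ 𝒰j j)
    (hIc : IsIndexPartition Ic) (hIcne : ∀ σ, (Ic σ).Nonempty) (hIcIm : ∀ σ, Ic σ ⊆ Im σ)
    (hJ : IsIndexPartition Jm) (hJne : ∀ σ, (Jm σ).Nonempty)
    (hnov : ∀ σ, Ic σ = Im σ)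
    (C' : Set ((i : ι) → Vec (nd i)) → Set ((j : κ) → Vec (pd j)))
    (hC' : IsSafetyController (deltaC (fun i => Vec (nd i)) (fun j => Vec (pd j)) Fbar (Set.pi Set.univ 𝒳i) (Set.pi Set.univ 𝒰j) P V Im Ic Jm) (cells P) C')
    (Cs : (σ : τ) → Set ((i : Im σ) → Vec (nd i.1)) → Set ((j : Jm σ) → Vec (pd j.1)))
    (hCs : ∀ σ, ∀ sσ ∈ cellsOn P (Im σ), Cs σ sσ =
      {uσ | ∃ s ∈ cells P, proj (fun i => Vec (nd i)) (Im σ) '' s = sσ ∧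
        ∃ u ∈ C' s, proj (fun j => Vec (pd j)) (Jm σ) u = uσ})
    (hCsOut : ∀ σ, ∀ sσ ∉ cellsOn P (Im σ), Cs σ sσ = ∅) :
    ∀ σ, IsSafetyController (deltaSub (fun i => Vec (nd i)) (fun j => Vec (pd j)) Fbar (Set.pi Set.univ 𝒳i) (Set.pi Set.univ 𝒰j) P V (Im σ) (Ic σ) (Jm σ))
      (cellsOn P (Im σ)) (Cs σ) := by

  classical
  obtain ⟨hC1, hC2, hC3⟩ := hC'
  have hPne : ∀ i, ∀ t ∈ P i, t.Nonempty := fun i => (hP i).2.1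
  have hPsub : ∀ i, ∀ t ∈ P i, t ⊆ 𝒳i i := fun i t ht =>
    (hP i).2.2.1 ▸ Set.subset_sUnion_of_mem ht
  have cellNe : ∀ s ∈ cells P, s.Nonempty := by
    rintro s ⟨f, hf, rfl⟩
    exact Set.univ_pi_nonempty_iff.2 fun i => hPne i _ (hf i)
  have cellSub : ∀ s ∈ cells P, s ⊆ Set.pi Set.univ 𝒳i := by
    rintro s ⟨f, hf, rfl⟩ x hx i _
    exact hPsub i _ (hf i) (hx i trivial)
  have outNotCell : (Set.pi Set.univ 𝒳i)ᶜ ∉ cells P := by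
    intro h
    obtain ⟨x, hx⟩ := cellNe _ h
    exact hx (cellSub _ h hx)
  have succ_cells : ∀ s u, u ∈ C' s →
      ∀ s₀ ∈ deltaC (fun i => Vec (nd i)) (fun j => Vec (pd j)) Fbar (Set.pi Set.univ 𝒳i)
        (Set.pi Set.univ 𝒰j) P V Im Ic Jm s u,
      s₀ ∈ cells P ∧ ∀ σ' : τ,
        proj (fun i => Vec (nd i)) (Im σ') '' s₀ ∈
          deltaSub (fun i => Vec (nd i)) (fun j => Vec (pd j)) Fbar (Set.pi Set.univ 𝒳i)
            (Set.pi Set.univ 𝒰j) P V (Im σ') (Ic σ') (Jm σ')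
            (proj (fun i => Vec (nd i)) (Im σ') '' s) (proj (fun j => Vec (pd j)) (Jm σ') u) := by
    intro s u hu s₀ hs₀
    have hcne : s₀ ∈ cells P := hC2 s₀ (hC3 s u hu s₀ hs₀)
    obtain ⟨hs, huV, h | h⟩ := hs₀
    · exact ⟨hcne, h.2⟩
    · rw [h.1] at hcne
      exact absurd hcne outNotCell
  intro σ
  have key : ∀ sσ, ∀ uσ ∈ Cs σ sσ, ∃ s ∈ cells P,
      proj (fun i => Vec (nd i)) (Im σ) '' s = sσ ∧ ∃ u ∈ C' s,
      proj (fun j => Vec (pd j)) (Jm σ) u = uσ := by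
    intro sσ uσ huσ
    by_cases h : sσ ∈ cellsOn P (Im σ)
    · rw [hCs σ sσ h] at huσ
      exact huσ
    · rw [hCsOut σ sσ h] at huσ
      exact absurd huσ (Set.notMem_empty _)
  refine ⟨?_, ?_, ?_⟩
  · -- enabledness
    intro sσ uσ huσ
    obtain ⟨s, hs, hproj, u, hu, huproj⟩ := key sσ uσ huσ
    subst hproj; subst huproj
    obtain ⟨s₀, hs₀⟩ := hC1 s u hu
    obtain ⟨hs₀c, hall⟩ := succ_cells s u hu s₀ hs₀
    exact ⟨_, hall σ⟩
  · -- domain in safe set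
    intro sσ hne
    by_contra h
    rw [hCsOut σ sσ h] at hne
    exact Set.not_nonempty_empty hne
  · -- invariance
    intro sσ uσ huσ s'σ hs'σ
    obtain ⟨s, hs, hproj, u, hu, huproj⟩ := key sσ uσ huσ
    subst hproj; subst huproj
    obtain ⟨hsσcell, huσV, hbr⟩ := hs'σ
    obtain ⟨s₀, hs₀⟩ := hC1 s u hu
    have huV : u ∈ Set.pi Set.univ V := hs₀.2.1
    rcases hbr with ⟨hs'c, hinter⟩ | ⟨hout, hcond⟩
    · -- successor is a cell: build a composed successor
      obtain ⟨hs₀c, hall⟩ := succ_cells s u hu s₀ hs₀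
      obtain ⟨f'', hf'', rfl⟩ := hs₀c
      obtain ⟨f', hf', hs'σeq⟩ := hs'c
      set g : (i : ι) → Set (Vec (nd i)) := fun i => if i ∈ Im σ then f' i else f'' i with hgdef
      have hg : ∀ i, g i ∈ P i := by
        intro i
        by_cases h : i ∈ Im σ <;> simp [hgdef, h, hf' i, hf'' i]
      have hgne : ∀ i, (g i).Nonempty := fun i => hPne i _ (hg i)
      have hf''ne : ∀ i, (f'' i).Nonempty := fun i => hPne i _ (hf'' i)
      have hs'cells : Set.pi Set.univ g ∈ cells P := ⟨g, hg, rfl⟩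
      have hprojσ : proj (fun i => Vec (nd i)) (Im σ) '' Set.pi Set.univ g = s'σ := by
        rw [proj_image_pi' _ g hgne, hs'σeq]
        have : (fun i : Im σ => g i.1) = fun i : Im σ => f' i.1 :=
          funext fun i => by simp [hgdef, i.2]
        rw [this]
      have hprojother : ∀ σ' ≠ σ, proj (fun i => Vec (nd i)) (Im σ') '' Set.pi Set.univ g =
          proj (fun i => Vec (nd i)) (Im σ') '' Set.pi Set.univ f'' := by
        intro σ' hne'
        rw [proj_image_pi' _ g hgne, proj_image_pi' _ f'' hf''ne]
        have hdisj : Disjoint (Im σ') (Im σ) := by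
          rw [← hnov, ← hnov]; exact hIc.2 hne'
        have : (fun i : Im σ' => g i.1) = fun i : Im σ' => f'' i.1 :=
          funext fun i => by
            have hni : i.1 ∉ Im σ := Set.disjoint_left.1 hdisj i.2
            simp [hgdef, hni]
        rw [this]
      have hmem : Set.pi Set.univ g ∈
          deltaC (fun i => Vec (nd i)) (fun j => Vec (pd j)) Fbar (Set.pi Set.univ 𝒳i)
            (Set.pi Set.univ 𝒰j) P V Im Ic Jm s u := by
        refine ⟨hs, huV, Or.inl ⟨hs'cells, fun σ' => ?_⟩⟩
        by_cases h : σ' = σ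
        · subst h
          rw [hprojσ]
          exact ⟨hsσcell, huσV, Or.inl ⟨⟨f', hf', hs'σeq⟩, hinter⟩⟩
        · rw [hprojother σ' h]
          exact hall σ'
      obtain ⟨u', hu'⟩ := hC3 s u hu _ hmem
      refine ⟨proj (fun j => Vec (pd j)) (Jm σ) u', ?_⟩
      rw [hCs σ s'σ ⟨f', hf', hs'σeq⟩]
      exact ⟨Set.pi Set.univ g, hs'cells, hprojσ, u', hu', rfl⟩
    · -- successor is Out: contradiction
      have hXc : (Set.pi Set.univ 𝒳i)ᶜ ∈
          deltaC (fun i => Vec (nd i)) (fun j => Vec (pd j)) Fbar (Set.pi Set.univ 𝒳i)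
            (Set.pi Set.univ 𝒰j) P V Im Ic Jm s u :=
        ⟨hs, huV, Or.inr ⟨rfl, σ, hsσcell, huσV, Or.inr ⟨rfl, hcond⟩⟩⟩
      exact absurd (hC2 _ (hC3 s u hu _ hXc)) outNotCell
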